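/- QuTE reduces to Bonferroni on the empty graph: if the graph G has no edges and each node hosts exactly one hypothesis (n_a = 1 for all a, so N = |V|), then for every integer c ≥ 0, every level α ∈ (0,1) and every fixed assignment of p-values, the c-step QuTE procedure at level α rejects the hypothesis at node a if and only if P_a ≤ α/N (the Bonferroni correction). -/

import Mathlib

open MeasureTheory ProbabilityTheory Finset

open Classical in
/-- The Benjamini–Hochberg count `k̂_α(P)`: the largest `k ∈ {0,…,N}` such that
at least `k` of the p-values are `≤ α k / N`, where `N` is the number of hypotheses. -/
noncomputable def bhCount {I : Type*} [Fintype I] (α : ℝ) (P : I → ℝ) : ℕ :=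
  Nat.findGreatest
    (fun k => k ≤ (Finset.univ.filter fun i => P i ≤ α * k / (Fintype.card I)).card)
    (Fintype.card I)

open Classical in
/-- The Benjamini–Hochberg rejection set `Rej_α(P) = {i : P i ≤ α k̂_α(P) / N}`. -/
noncomputable def bhRej {I : Type*} [Fintype I] (α : ℝ) (P : I → ℝ) : Finset I :=
  Finset.univ.filter fun i => P i ≤ α * (bhCount α P) / (Fintype.card I)

open Classical in
/-- The p-value vector `P^{b,c}` known to node `b` after `c` rounds of communication:
every p-value hosted at a node of graph distance more than `c` from `b` is replaced by `1`. -/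
noncomputable def quteMasked {V : Type*} (G : SimpleGraph V) (n : V → ℕ)
    (c : ℕ) (P : (Σ a : V, Fin (n a)) → ℝ) (b : V) : (Σ a : V, Fin (n a)) → ℝ :=
  fun i => if G.edist b i.1 ≤ c then P i else 1

open Classical in
/-- The rejection set of the `c`-step QuTE procedure at level `α`: hypothesis `j` at node `a`
is rejected iff some node `b` within graph distance `c` of `a` rejects it in its local BH test
at level `α` on the p-values it knows (unknown p-values set to `1`). -/
noncomputable def quteRej {V : Type*} [Fintype V] (G : SimpleGraph V) (n : V → ℕ)
    (c : ℕ) (α : ℝ) (P : (Σ a : V, Fin (n a)) → ℝ) : Finset (Σ a : V, Fin (n a)) :=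
  Finset.univ.filter fun i => ∃ b : V, G.edist i.1 b ≤ c ∧
    P i ≤ α * (bhCount α (quteMasked G n c P b)) / (Fintype.card (Σ a : V, Fin (n a)))

/-- **QuTE reduces to Bonferroni on the empty graph.**
If the graph has no edges and each node hosts exactly one hypothesis (`n a = 1` for all `a`,
so `N = |V|`), then for every `c ≥ 0`, every level `α ∈ (0,1)` and every fixed assignment of
p-values, `c`-step QuTE at level `α` rejects the hypothesis at node `a` iff `P_a ≤ α / N`. -/
theorem quteRej_empty_graph_eq_bonferroni
    {V : Type*} [Fintype V] (G : SimpleGraph V) (hG : G = ⊥)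
    (n : V → ℕ) (hn : ∀ a, n a = 1) (c : ℕ)
    (P : (Σ a : V, Fin (n a)) → ℝ) (hPrange : ∀ i, P i ∈ Set.Icc (0 : ℝ) 1)
    (α : ℝ) (hα : α ∈ Set.Ioo (0 : ℝ) 1) :
    ∀ i : (Σ a : V, Fin (n a)),
      i ∈ quteRej G n c α P ↔ P i ≤ α / Fintype.card (Σ a : V, Fin (n a)) := by
  classical
  intro i
  set N := Fintype.card (Σ a : V, Fin (n a)) with hN
  have hNpos : 0 < N := Fintype.card_pos_iff.mpr ⟨i⟩
  have hNR : (0 : ℝ) < (N : ℝ) := by exact_mod_cast hNpos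
  have hedist : ∀ a b : V, G.edist a b ≤ c → a = b := by
    intro a b h
    have : G.edist a b ≠ ⊤ := by
      intro ht; rw [ht] at h
      exact (ENat.coe_lt_top c).not_ge h
    rw [hG] at this
    exact SimpleGraph.reachable_bot.mp (SimpleGraph.edist_ne_top_iff_reachable.mp this)
  have hmask_self : ∀ b : V, ∀ j : Fin (n b),
      quteMasked G n c P b ⟨b, j⟩ = P ⟨b, j⟩ := by
    intro b j
    simp [quteMasked, SimpleGraph.edist_self]
  have hmask_ne : ∀ b : V, ∀ x : (Σ a : V, Fin (n a)), x.1 ≠ b →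
      quteMasked G n c P b x = 1 := by
    intro b x hx
    have : ¬ G.edist b x.1 ≤ (c : ℕ∞) := fun h => hx ((hedist b x.1 h).symm)
    simp [quteMasked, this]
  -- key: bhCount of any masked vector is ≤ 1
  have hcount_le : ∀ b : V, bhCount α (quteMasked G n c P b) ≤ 1 := by
    intro b
    by_contra hlt
    push_neg at hlt
    set m := bhCount α (quteMasked G n c P b) with hm
    have hm0 : m ≠ 0 := by omega
    have hmN : m ≤ N := Nat.findGreatest_le _
    have hspec : m ≤ (Finset.univ.filter fun x : (Σ a : V, Fin (n a)) =>
        quteMasked G n c P b x ≤ α * m / N).card := by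
      have h := Nat.findGreatest_eq_iff
        (P := fun k => k ≤ (Finset.univ.filter fun x : (Σ a : V, Fin (n a)) =>
          quteMasked G n c P b x ≤ α * k / (Fintype.card (Σ a : V, Fin (n a)))).card)
        (k := Fintype.card (Σ a : V, Fin (n a))) (m := m)
      exact (h.1 hm.symm).2.1 hm0
    have hsub : (Finset.univ.filter fun x : (Σ a : V, Fin (n a)) =>
        quteMasked G n c P b x ≤ α * m / N) ⊆
        Finset.univ.filter fun x => x.1 = b := by
      intro x hx
      simp only [Finset.mem_filter, Finset.mem_univ, true_and] at hx ⊢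
      by_contra hxb
      rw [hmask_ne b x hxb] at hx
      have hle : α * m / N ≤ α := by
        rw [div_le_iff₀ hNR]
        have : (m : ℝ) ≤ (N : ℝ) := by exact_mod_cast hmN
        nlinarith [hα.1]
      linarith [hα.2]
    have hcard : (Finset.univ.filter fun x : (Σ a : V, Fin (n a)) => x.1 = b).card ≤ 1 := by
      apply Finset.card_le_one.mpr
      intro x hx y hy
      simp only [Finset.mem_filter, Finset.mem_univ, true_and] at hx hy
      obtain ⟨xa, xj⟩ := x
      obtain ⟨ya, yj⟩ := y
      have hxy : xa = ya := hx.trans hy.symm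
      subst hxy
      have hj : xj = yj := by
        have h1 := xj.isLt
        have h2 := yj.isLt
        have h3 := hn xa
        ext
        omega
      rw [hj]
    have := le_trans (Finset.card_le_card hsub) hcard
    omega
  constructor
  · intro hi
    simp only [quteRej, Finset.mem_filter, Finset.mem_univ, true_and, ← hN] at hi
    obtain ⟨b, hb, hPb⟩ := hi
    have hk1 : ((bhCount α (quteMasked G n c P b)) : ℝ) ≤ 1 := by
      exact_mod_cast hcount_le b
    calc P i ≤ α * (bhCount α (quteMasked G n c P b)) / N := hPb
      _ ≤ α * 1 / N := by gcongr; exact hα.1.le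
      _ = α / N := by ring
  · intro hPi
    simp only [quteRej, Finset.mem_filter, Finset.mem_univ, true_and, ← hN]
    refine ⟨i.1, ?_, ?_⟩
    · rw [SimpleGraph.edist_self]; exact zero_le
    · have h1 : 1 ≤ bhCount α (quteMasked G n c P i.1) := by
        apply Nat.le_findGreatest hNpos
        have hmem : i ∈ (Finset.univ.filter fun x : (Σ a : V, Fin (n a)) =>
            quteMasked G n c P i.1 x ≤ α * (1 : ℕ) / N) := by
          simp only [Finset.mem_filter, Finset.mem_univ, true_and]
          obtain ⟨a, j⟩ := i
          rw [hmask_self a j]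
          simpa using hPi
        exact Finset.card_pos.mpr ⟨i, hmem⟩
      have h1R : (1 : ℝ) ≤ (bhCount α (quteMasked G n c P i.1) : ℝ) := by exact_mod_cast h1
      calc P i ≤ α / N := hPi
        _ = α * 1 / N := by ring
        _ ≤ α * (bhCount α (quteMasked G n c P i.1)) / N := by
            gcongr
            exact hα.1.le
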